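/- For all even integers m ≥ 4 and all integers n ≥ 2, k ≥ 2 with m − k ≥ 1, the signed generalized book graph (B(m,n,k),σ_n), where σ_n has negative edge set {v₁u₁ⁱ : 1 ≤ i ≤ n}, satisfies χ'(B(m,n,k),σ_n) = n+1. -/

import Mathlib

open scoped Classical

/-- The color set `M_q`: for `q = 2r`, `{±1, …, ±r}`; for `q = 2r+1`, `{0, ±1, …, ±r}`. -/
def colorSet (q : ℕ) : Set ℤ :=
  {c : ℤ | c.natAbs ≤ q / 2 ∧ (Even q → c ≠ 0)}

/-- A proper `q`-edge coloring of the signed graph `(G, σ)`, given as an assignment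
`γ v w` of a color to the incidence `(v, vw)`. -/
def IsProperSignedEdgeColoring {V : Type*} (G : SimpleGraph V)
    (σ : Sym2 V → ℤˣ) (q : ℕ) (γ : V → V → ℤ) : Prop :=
  (∀ ⦃v w : V⦄, G.Adj v w → γ v w ∈ colorSet q) ∧
  (∀ ⦃v w : V⦄, G.Adj v w → γ v w = (-(σ s(v, w) : ℤ)) * γ w v) ∧
  (∀ ⦃v w₁ w₂ : V⦄, G.Adj v w₁ → G.Adj v w₂ → w₁ ≠ w₂ → γ v w₁ ≠ γ v w₂)

/-- The chromatic index of a signed graph: the least `q` admitting a proper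
`q`-edge coloring. -/
noncomputable def signedChromaticIndex {V : Type*} (G : SimpleGraph V)
    (σ : Sym2 V → ℤˣ) : ℕ :=
  sInf {q : ℕ | ∃ γ : V → V → ℤ, IsProperSignedEdgeColoring G σ q γ}

/-- Vertices of the generalized book graph `B(m,n,k)`: the spine path `v₁ … v_k`
(`Sum.inl`) together with the internal vertices `u_j^i` of the `n` pages (`Sum.inr`). -/
abbrev BookVertex (m n k : ℕ) : Type := Fin k ⊕ Fin n × Fin (m - k)

/-- The generalized book graph `B(m,n,k)`: `n` cycles of length `m` sharing the
common path `v₁ v₂ ⋯ v_k`, the `i`-th cycle being `v₁ u₁ⁱ u₂ⁱ ⋯ u_{m-k}ⁱ v_k ⋯ v₂ v₁`. -/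
def bookGraph (m n k : ℕ) : SimpleGraph (BookVertex m n k) :=
  SimpleGraph.fromRel (fun x y =>
    match x, y with
    | Sum.inl a, Sum.inl b => (b : ℕ) = (a : ℕ) + 1
    | Sum.inl a, Sum.inr p =>
        ((a : ℕ) = 0 ∧ (p.2 : ℕ) = 0) ∨ ((a : ℕ) = k - 1 ∧ (p.2 : ℕ) = m - k - 1)
    | Sum.inr p, Sum.inr p' => p.1 = p'.1 ∧ (p'.2 : ℕ) = (p.2 : ℕ) + 1
    | Sum.inr _, Sum.inl _ => False)

/-- The signature `σ_l` on `B(m,n,k)` whose negative edges are exactly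
`v₁u₁ⁱ` for `1 ≤ i ≤ l`. -/
noncomputable def bookSigma (m n k l : ℕ) (hk : 0 < k) (hmk : 0 < m - k) :
    Sym2 (BookVertex m n k) → ℤˣ :=
  fun e =>
    if ∃ i : Fin n, (i : ℕ) < l ∧
        e = s(Sum.inl (⟨0, hk⟩ : Fin k),
              Sum.inr ((i, ⟨0, hmk⟩) : Fin n × Fin (m - k)))
    then -1 else 1

/- ---------- auxiliary ---------- -/

def fcol (n j : ℕ) : ℤ :=
  if j % 2 = 0 then -((j / 2 : ℕ) + 1 : ℤ)
  else if j = n - 1 then 0 else ((j / 2 : ℕ) + 2 : ℤ)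

noncomputable def dcol (n i : ℕ) : ℤ := if fcol n ((i + 1) % n) = -1 then -1 else 1

noncomputable def bookColoring (m n k : ℕ) : BookVertex m n k → BookVertex m n k → ℤ
  | Sum.inl a, Sum.inl b => if (b : ℕ) = (a : ℕ) + 1 then 1 else -1
  | Sum.inl a, Sum.inr (i, _) =>
      if (a : ℕ) = 0 then fcol n i else -(fcol n (((i : ℕ) + 1) % n))
  | Sum.inr (i, _), Sum.inl a =>
      if (a : ℕ) = 0 then fcol n i else fcol n (((i : ℕ) + 1) % n)
  | Sum.inr (i, p), Sum.inr (_, p') =>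
      if (p' : ℕ) = (p : ℕ) + 1 then dcol n i else -(dcol n i)

lemma fcol_ne_one (n j : ℕ) : fcol n j ≠ 1 := by
  unfold fcol; split
  · omega
  · split <;> omega

lemma fcol_injOn (n j₁ j₂ : ℕ) (h₁ : j₁ < n) (h₂ : j₂ < n)
    (h : fcol n j₁ = fcol n j₂) : j₁ = j₂ := by
  unfold fcol at h
  split at h <;> split at h <;> first
  | omega
  | (split at h <;> [skip; split at h] <;> omega)
  | (split at h <;> omega)

lemma fcol_mem (n j : ℕ) (hn : 2 ≤ n) (hj : j < n) : fcol n j ∈ colorSet (n + 1) := by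
  constructor
  · unfold fcol; split
    · omega
    · split <;> omega
  · intro he
    have hodd : n % 2 = 1 := by rcases he with ⟨r, hr⟩; omega
    unfold fcol; split
    · omega
    · split <;> omega

lemma one_mem_colorSet (q : ℕ) (hq : 2 ≤ q) : (1 : ℤ) ∈ colorSet q := by
  constructor
  · simp; omega
  · intro _; norm_num

lemma neg_mem_colorSet {q : ℕ} {c : ℤ} (h : c ∈ colorSet q) : -c ∈ colorSet q := by
  obtain ⟨h1, h2⟩ := h
  exact ⟨by simpa using h1, fun he => by simpa using (h2 he)⟩

lemma dcol_mem (n i : ℕ) (hn : 2 ≤ n) : dcol n i ∈ colorSet (n + 1) := by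
  unfold dcol; split
  · exact neg_mem_colorSet (one_mem_colorSet _ (by omega))
  · exact one_mem_colorSet _ (by omega)

lemma dcol_ne_zero (n i : ℕ) : dcol n i ≠ 0 := by unfold dcol; split <;> omega

lemma mod_lt' (n i : ℕ) (hn : 2 ≤ n) : (i + 1) % n < n := Nat.mod_lt _ (by omega)

lemma mod_ne (n i : ℕ) (hn : 2 ≤ n) (hi : i < n) : (i + 1) % n ≠ i := by
  rcases Nat.lt_or_ge (i + 1) n with h | h
  · rw [Nat.mod_eq_of_lt h]; omega
  · have : i + 1 = n := by omega
    rw [this, Nat.mod_self]; omega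

lemma fcol_ne_dcol (n i : ℕ) (hn : 2 ≤ n) (hi : i < n) : fcol n i ≠ dcol n i := by
  unfold dcol; split
  next h =>
    intro he
    have := fcol_injOn n i ((i + 1) % n) hi (mod_lt' n i hn) (he.trans h.symm)
    exact (mod_ne n i hn hi) this.symm
  next h => exact fcol_ne_one n i

lemma fcol_succ_ne_neg_dcol (n i : ℕ) : fcol n ((i + 1) % n) ≠ -(dcol n i) := by
  unfold dcol; split
  next h => simpa using fcol_ne_one n ((i + 1) % n)
  next h => simpa using h

lemma succ_mod_inj (n i₁ i₂ : ℕ) (h₁ : i₁ < n) (h₂ : i₂ < n)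
    (h : (i₁ + 1) % n = (i₂ + 1) % n) : i₁ = i₂ := by
  rcases Nat.lt_or_ge (i₁ + 1) n with c1 | c1 <;> rcases Nat.lt_or_ge (i₂ + 1) n with c2 | c2
  · rw [Nat.mod_eq_of_lt c1, Nat.mod_eq_of_lt c2] at h; omega
  · have hc : i₂ + 1 = n := by omega
    rw [Nat.mod_eq_of_lt c1, hc, Nat.mod_self] at h; omega
  · have hc : i₁ + 1 = n := by omega
    rw [Nat.mod_eq_of_lt c2, hc, Nat.mod_self] at h; omega
  · omega

lemma adj_ll (m n k : ℕ) (a b : Fin k) :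
    (bookGraph m n k).Adj (Sum.inl a) (Sum.inl b) ↔ ((b:ℕ) = a + 1 ∨ (a:ℕ) = b + 1) := by
  simp only [bookGraph, SimpleGraph.fromRel_adj, ne_eq, Sum.inl.injEq]
  constructor
  · rintro ⟨-, h⟩; exact h
  · rintro h
    refine ⟨fun hab => ?_, h⟩
    subst hab; omega

lemma adj_lr (m n k : ℕ) (a : Fin k) (i : Fin n) (p : Fin (m-k)) :
    (bookGraph m n k).Adj (Sum.inl a) (Sum.inr (i,p)) ↔
      (((a:ℕ) = 0 ∧ (p:ℕ) = 0) ∨ ((a:ℕ) = k - 1 ∧ (p:ℕ) = m - k - 1)) := by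
  simp only [bookGraph, SimpleGraph.fromRel_adj, ne_eq]
  constructor
  · rintro ⟨-, h | h⟩
    · exact h
    · exact h.elim
  · intro h; exact ⟨by simp, Or.inl h⟩

lemma adj_rl (m n k : ℕ) (a : Fin k) (i : Fin n) (p : Fin (m-k)) :
    (bookGraph m n k).Adj (Sum.inr (i,p)) (Sum.inl a) ↔
      (((a:ℕ) = 0 ∧ (p:ℕ) = 0) ∨ ((a:ℕ) = k - 1 ∧ (p:ℕ) = m - k - 1)) := by
  rw [SimpleGraph.adj_comm]; exact adj_lr m n k a i p

lemma adj_rr (m n k : ℕ) (i i' : Fin n) (p p' : Fin (m-k)) :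
    (bookGraph m n k).Adj (Sum.inr (i,p)) (Sum.inr (i',p')) ↔
      (i = i' ∧ ((p':ℕ) = p + 1 ∨ (p:ℕ) = p' + 1)) := by
  simp only [bookGraph, SimpleGraph.fromRel_adj, ne_eq, Sum.inr.injEq, Prod.mk.injEq]
  constructor
  · rintro ⟨-, ⟨h1, h2⟩ | ⟨h1, h2⟩⟩
    · exact ⟨h1, Or.inl h2⟩
    · exact ⟨h1.symm, Or.inr h2⟩
  · rintro ⟨rfl, h | h⟩
    · exact ⟨fun hc => by simp at hc; omega, Or.inl ⟨rfl, h⟩⟩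
    · exact ⟨fun hc => by simp at hc; omega, Or.inr ⟨rfl, h⟩⟩

lemma sigma_ll (m n k l : ℕ) (hk : 0 < k) (hmk : 0 < m - k) (a b : Fin k) :
    bookSigma m n k l hk hmk s(Sum.inl a, Sum.inl b) = 1 := by
  unfold bookSigma
  rw [if_neg]
  rintro ⟨i, -, he⟩
  rw [Sym2.eq_iff] at he
  rcases he with ⟨-, h⟩ | ⟨h, -⟩ <;> exact nomatch h

lemma sigma_rr (m n k l : ℕ) (hk : 0 < k) (hmk : 0 < m - k) (i i' : Fin n)
    (p p' : Fin (m-k)) :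
    bookSigma m n k l hk hmk s(Sum.inr (i,p), Sum.inr (i',p')) = 1 := by
  unfold bookSigma
  rw [if_neg]
  rintro ⟨j, -, he⟩
  rw [Sym2.eq_iff] at he
  rcases he with ⟨h, -⟩ | ⟨-, h⟩ <;> exact nomatch h

lemma sigma_lr_pos (m n k l : ℕ) (hk : 0 < k) (hmk : 0 < m - k) (a : Fin k)
    (i : Fin n) (p : Fin (m-k)) (ha : (a:ℕ) ≠ 0) :
    bookSigma m n k l hk hmk s(Sum.inl a, Sum.inr (i,p)) = 1 := by
  unfold bookSigma
  rw [if_neg]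
  rintro ⟨j, -, he⟩
  rw [Sym2.eq_iff] at he
  rcases he with ⟨h1, -⟩ | ⟨h1, -⟩
  · exact ha (by rw [Sum.inl.inj h1])
  · exact nomatch h1

lemma sigma_lr_neg (m n k l : ℕ) (hk : 0 < k) (hmk : 0 < m - k) (a : Fin k)
    (i : Fin n) (p : Fin (m-k)) (ha : (a:ℕ) = 0) (hp : (p:ℕ) = 0) (hi : (i:ℕ) < l) :
    bookSigma m n k l hk hmk s(Sum.inl a, Sum.inr (i,p)) = -1 := by
  have ha' : a = ⟨0, hk⟩ := Fin.ext ha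
  have hp' : p = ⟨0, hmk⟩ := Fin.ext hp
  subst ha'; subst hp'
  unfold bookSigma
  rw [if_pos ⟨i, hi, rfl⟩]

lemma bookColoring_mem (m n k : ℕ) (hn : 2 ≤ n) (v w : BookVertex m n k) :
    bookColoring m n k v w ∈ colorSet (n + 1) := by
  have h1 : (1 : ℤ) ∈ colorSet (n + 1) := one_mem_colorSet _ (by omega)
  rcases v with a | ⟨i, p⟩ <;> rcases w with b | ⟨i', p'⟩ <;>
    simp only [bookColoring] <;> split_ifs
  · exact h1
  · exact neg_mem_colorSet h1
  · exact fcol_mem n _ hn i'.2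
  · exact neg_mem_colorSet (fcol_mem n _ hn (mod_lt' n _ hn))
  · exact fcol_mem n _ hn i.2
  · exact fcol_mem n _ hn (mod_lt' n _ hn)
  · exact dcol_mem n _ hn
  · exact neg_mem_colorSet (dcol_mem n _ hn)

lemma bookColoring_sym (m n k : ℕ) (hn : 2 ≤ n) (hk : 2 ≤ k)
    (hk0 : 0 < k) (hmk0 : 0 < m - k) :
    ∀ ⦃v w : BookVertex m n k⦄, (bookGraph m n k).Adj v w →
      bookColoring m n k v w =
        (-(bookSigma m n k n hk0 hmk0 s(v, w) : ℤ)) * bookColoring m n k w v := by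
  intro v w h
  rcases v with a | ⟨i, p⟩ <;> rcases w with b | ⟨i', p'⟩
  · rw [adj_ll] at h
    rw [sigma_ll]
    simp only [bookColoring, Units.val_one]
    rcases h with h | h
    · rw [if_pos h, if_neg (by omega)]; norm_num
    · rw [if_neg (by omega), if_pos h]; norm_num
  · rw [adj_lr] at h
    simp only [bookColoring]
    rcases h with ⟨ha, hp⟩ | ⟨ha, hp⟩
    · rw [sigma_lr_neg m n k n hk0 hmk0 _ _ _ ha hp i'.2]
      rw [if_pos ha, if_pos ha]
      simp
    · have ha0 : (a:ℕ) ≠ 0 := by omega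
      rw [sigma_lr_pos m n k n hk0 hmk0 _ _ _ ha0]
      rw [if_neg ha0, if_neg ha0]
      simp
  · rw [adj_rl] at h
    rw [Sym2.eq_swap]
    simp only [bookColoring]
    rcases h with ⟨ha, hp⟩ | ⟨ha, hp⟩
    · rw [sigma_lr_neg m n k n hk0 hmk0 _ _ _ ha hp i.2]
      rw [if_pos ha, if_pos ha]
      simp
    · have ha0 : (b:ℕ) ≠ 0 := by omega
      rw [sigma_lr_pos m n k n hk0 hmk0 _ _ _ ha0]
      rw [if_neg ha0, if_neg ha0]
      simp
  · rw [adj_rr] at h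
    obtain ⟨rfl, h⟩ := h
    rw [sigma_rr]
    simp only [bookColoring, Units.val_one]
    rcases h with h | h
    · rw [if_pos h, if_neg (by omega)]; ring
    · rw [if_neg (by omega), if_pos h]; ring

lemma bookColoring_distinct (m n k : ℕ) (hn : 2 ≤ n) (hk : 2 ≤ k) (hmk : 1 ≤ m - k) :
    ∀ ⦃v w₁ w₂ : BookVertex m n k⦄, (bookGraph m n k).Adj v w₁ →
      (bookGraph m n k).Adj v w₂ → w₁ ≠ w₂ →
      bookColoring m n k v w₁ ≠ bookColoring m n k v w₂ := by
  intro v w₁ w₂ h1 h2 hne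
  rcases v with a | ⟨i, p⟩
  · rcases w₁ with b₁ | ⟨i₁, p₁⟩ <;> rcases w₂ with b₂ | ⟨i₂, p₂⟩
    · -- two spine neighbours of a spine vertex
      rw [adj_ll] at h1 h2
      simp only [bookColoring]
      have hb : (b₁:ℕ) ≠ (b₂:ℕ) := fun hc => hne (by rw [Sum.inl.injEq]; exact Fin.ext hc)
      rcases h1 with h1 | h1 <;> rcases h2 with h2 | h2
      · omega
      · rw [if_pos h1, if_neg (by omega)]; norm_num
      · rw [if_neg (by omega), if_pos h2]; norm_num
      · omega
    · -- spine neighbour vs page neighbour of a spine vertex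
      rw [adj_ll] at h1; rw [adj_lr] at h2
      simp only [bookColoring]
      rcases h2 with ⟨ha, hp⟩ | ⟨ha, hp⟩
      · have hb1 : (b₁:ℕ) = (a:ℕ) + 1 := by omega
        rw [if_pos hb1, if_pos ha]
        exact (fcol_ne_one n _).symm
      · have hb : (b₁:ℕ) < k := b₁.2
        have hb1 : ¬ ((b₁:ℕ) = (a:ℕ) + 1) := by omega
        rw [if_neg hb1, if_neg (by omega)]
        have := fcol_ne_one n (((i₂:ℕ) + 1) % n)
        intro hc; apply this; omega
    · -- page neighbour vs spine neighbour (mirror)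
      rw [adj_lr] at h1; rw [adj_ll] at h2
      simp only [bookColoring]
      rcases h1 with ⟨ha, hp⟩ | ⟨ha, hp⟩
      · have hb2 : (b₂:ℕ) = (a:ℕ) + 1 := by omega
        rw [if_pos hb2, if_pos ha]
        exact fcol_ne_one n _
      · have hb : (b₂:ℕ) < k := b₂.2
        have hb2 : ¬ ((b₂:ℕ) = (a:ℕ) + 1) := by omega
        rw [if_neg hb2, if_neg (by omega)]
        have := fcol_ne_one n (((i₁:ℕ) + 1) % n)
        intro hc; apply this; omega
    · -- two page neighbours of a spine vertex
      rw [adj_lr] at h1 h2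
      simp only [bookColoring]
      rcases h1 with ⟨ha, hp1⟩ | ⟨ha, hp1⟩ <;> rcases h2 with ⟨ha2, hp2⟩ | ⟨ha2, hp2⟩
      · rw [if_pos ha, if_pos ha]
        intro hc
        have hi := fcol_injOn n _ _ i₁.2 i₂.2 hc
        exact hne (by rw [Sum.inr.injEq, Prod.mk.injEq]
                      exact ⟨Fin.ext hi, Fin.ext (by omega)⟩)
      · omega
      · omega
      · rw [if_neg (by omega), if_neg (by omega)]
        intro hc
        have hc' : fcol n (((i₁:ℕ) + 1) % n) = fcol n (((i₂:ℕ) + 1) % n) := by omega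
        have hi := succ_mod_inj n _ _ i₁.2 i₂.2
          (fcol_injOn n _ _ (mod_lt' n _ hn) (mod_lt' n _ hn) hc')
        exact hne (by rw [Sum.inr.injEq, Prod.mk.injEq]
                      exact ⟨Fin.ext hi, Fin.ext (by omega)⟩)
  · rcases w₁ with a₁ | ⟨i₁, p₁⟩ <;> rcases w₂ with a₂ | ⟨i₂, p₂⟩
    · -- two spine neighbours of a page vertex
      rw [adj_rl] at h1 h2
      simp only [bookColoring]
      have hb : (a₁:ℕ) ≠ (a₂:ℕ) := fun hc => hne (by rw [Sum.inl.injEq]; exact Fin.ext hc)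
      rcases h1 with ⟨ha, hp1⟩ | ⟨ha, hp1⟩ <;> rcases h2 with ⟨ha2, hp2⟩ | ⟨ha2, hp2⟩
      · omega
      · rw [if_pos ha, if_neg (by omega)]
        intro hc
        exact mod_ne n (i:ℕ) hn i.2 (fcol_injOn n _ _ (mod_lt' n _ hn) i.2 hc.symm)
      · rw [if_neg (by omega), if_pos ha2]
        intro hc
        exact mod_ne n (i:ℕ) hn i.2 (fcol_injOn n _ _ (mod_lt' n _ hn) i.2 hc)
      · omega
    · -- spine neighbour vs page neighbour of a page vertex
      rw [adj_rl] at h1; rw [adj_rr] at h2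
      obtain ⟨rfl, hq⟩ := h2
      simp only [bookColoring]
      rcases h1 with ⟨ha, hp⟩ | ⟨ha, hp⟩ <;> rcases hq with hq | hq
      · rw [if_pos ha, if_pos hq]
        exact fcol_ne_dcol n _ hn i.2
      · omega
      · exact absurd hq (by have := p₂.2; omega)
      · rw [if_neg (by omega), if_neg (by omega)]
        exact fcol_succ_ne_neg_dcol n _
    · -- page neighbour vs spine neighbour of a page vertex (mirror)
      rw [adj_rr] at h1; rw [adj_rl] at h2
      obtain ⟨rfl, hq⟩ := h1
      simp only [bookColoring]
      rcases h2 with ⟨ha, hp⟩ | ⟨ha, hp⟩ <;> rcases hq with hq | hq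
      · rw [if_pos ha, if_pos hq]
        exact (fcol_ne_dcol n _ hn i.2).symm
      · omega
      · exact absurd hq (by have := p₁.2; omega)
      · rw [if_neg (by omega), if_neg (by omega)]
        exact (fcol_succ_ne_neg_dcol n _).symm
    · -- two page neighbours of a page vertex
      rw [adj_rr] at h1 h2
      obtain ⟨rfl, hq1⟩ := h1
      obtain ⟨rfl, hq2⟩ := h2
      simp only [bookColoring]
      rcases hq1 with h | h <;> rcases hq2 with h' | h'
      · exact absurd (by rw [Sum.inr.injEq, Prod.mk.injEq]
                         exact ⟨rfl, Fin.ext (by omega)⟩) hne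
      · rw [if_pos h, if_neg (by omega)]
        have := dcol_ne_zero n (i:ℕ); omega
      · rw [if_neg (by omega), if_pos h']
        have := dcol_ne_zero n (i:ℕ); omega
      · exact absurd (by rw [Sum.inr.injEq, Prod.mk.injEq]
                         exact ⟨rfl, Fin.ext (by omega)⟩) hne

noncomputable def colorFinset (q : ℕ) : Finset ℤ :=
  if Even q then (Finset.Icc (-(q/2 : ℤ)) (q/2)).erase 0 else Finset.Icc (-(q/2 : ℤ)) (q/2)

lemma mem_colorFinset {q : ℕ} {c : ℤ} (h : c ∈ colorSet q) : c ∈ colorFinset q := by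
  obtain ⟨h1, h2⟩ := h
  unfold colorFinset; split
  next he =>
    rw [Finset.mem_erase, Finset.mem_Icc]
    exact ⟨h2 he, by omega, by omega⟩
  next he =>
    rw [Finset.mem_Icc]
    exact ⟨by omega, by omega⟩

lemma colorFinset_card (q : ℕ) : (colorFinset q).card = q := by
  unfold colorFinset; split
  next he =>
    rw [Finset.card_erase_of_mem (by rw [Finset.mem_Icc]; omega), Int.card_Icc]
    obtain ⟨r, hr⟩ := he; omega
  next he =>
    rw [Int.card_Icc]
    rcases Nat.even_or_odd q with h | h
    · exact absurd h he
    · obtain ⟨r, hr⟩ := h; omega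

lemma chrom_lower (m n k q : ℕ) (hn : 2 ≤ n) (hk : 2 ≤ k) (hmk : 1 ≤ m - k)
    (σ : Sym2 (BookVertex m n k) → ℤˣ) (γ : BookVertex m n k → BookVertex m n k → ℤ)
    (h : IsProperSignedEdgeColoring (bookGraph m n k) σ q γ) : n + 1 ≤ q := by
  obtain ⟨hmem, -, hdist⟩ := h
  set v₁ : BookVertex m n k := Sum.inl ⟨0, by omega⟩ with hv₁
  let w : Fin (n+1) → BookVertex m n k := fun j =>
    if hj : (j:ℕ) < n then Sum.inr (⟨j, hj⟩, ⟨0, by omega⟩) else Sum.inl ⟨1, by omega⟩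
  have hadj : ∀ j, (bookGraph m n k).Adj v₁ (w j) := by
    intro j
    unfold w; split
    · rw [hv₁, adj_lr]; left; exact ⟨rfl, rfl⟩
    · rw [hv₁, adj_ll]; left; rfl
  have hwinj : Function.Injective w := by
    intro j₁ j₂ hj
    unfold w at hj
    split at hj <;> split at hj
    · simp only [Sum.inr.injEq, Prod.mk.injEq, Fin.mk.injEq] at hj
      exact Fin.ext hj.1
    · exact absurd hj (by simp)
    · exact absurd hj (by simp)
    · have := j₁.2; have := j₂.2; exact Fin.ext (by omega)
  have hinj : Function.Injective fun j => γ v₁ (w j) := by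
    intro j₁ j₂ hj
    by_contra hne
    exact hdist (hadj j₁) (hadj j₂) (fun he => hne (hwinj he)) hj
  calc n + 1 = (Finset.univ.image fun j => γ v₁ (w j)).card := by
        rw [Finset.card_image_of_injective _ hinj, Finset.card_univ, Fintype.card_fin]
    _ ≤ (colorFinset q).card := by
        apply Finset.card_le_card
        intro c hc
        rw [Finset.mem_image] at hc
        obtain ⟨j, -, rfl⟩ := hc
        exact mem_colorFinset (hmem (hadj j))
    _ = q := colorFinset_card q


/-- For all even `m ≥ 4` and all `n ≥ 2`, `k ≥ 2` with `m - k ≥ 1`, the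
signed generalized book graph `(B(m,n,k), σ_n)`, whose negative edges are exactly
`v₁u₁ⁱ` for `1 ≤ i ≤ n`, has chromatic index `n + 1`. -/
theorem book_chromatic_index_sigma_n_even (m n k : ℕ) (hm : 4 ≤ m) (heven : Even m)
    (hn : 2 ≤ n) (hk : 2 ≤ k) (hmk : 1 ≤ m - k) :
    signedChromaticIndex (bookGraph m n k)
      (bookSigma m n k n (by omega) (by omega)) = n + 1 := by
  have hub : IsProperSignedEdgeColoring (bookGraph m n k)
      (bookSigma m n k n (by omega) (by omega)) (n+1) (bookColoring m n k) :=
    ⟨fun v w _ => bookColoring_mem m n k hn v w,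
     bookColoring_sym m n k hn hk (by omega) (by omega),
     bookColoring_distinct m n k hn hk hmk⟩
  apply le_antisymm
  · exact Nat.sInf_le ⟨bookColoring m n k, hub⟩
  · have hmem := Nat.sInf_mem (⟨n + 1, bookColoring m n k, hub⟩ :
      Set.Nonempty {q : ℕ | ∃ γ, IsProperSignedEdgeColoring (bookGraph m n k)
        (bookSigma m n k n (by omega) (by omega)) q γ})
    obtain ⟨γ, hγ⟩ := hmem
    exact chrom_lower m n k _ hn hk hmk _ γ hγ
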